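/- Let Ω₂ = {x ∈ ℝ³ : x₁>0, x₂>0, x₃>0} and let v ∈ ℝ³ be a nonzero vector with non-negative entries such that at least two entries of v are nonzero. Then the group of diagonal matrices diag(λ₁,λ₂,λ₃) with all λ_j > 0 having v as an eigenvector does not act transitively on Ω₂. -/

import Mathlib

/-- The open positive octant in `ℝ³`. -/
def posOctant : Set (Fin 3 → ℝ) := {x | 0 < x 0 ∧ 0 < x 1 ∧ 0 < x 2}

/-- If `v ∈ ℝ³` is nonzero with non-negative entries and at least two
nonzero entries, then the group of diagonal matrices with positive entries having `v`
as an eigenvector does not act transitively on the positive octant `Ω₂`. -/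
theorem diag_eigvec_not_transitive (v : Fin 3 → ℝ) (hv : v ≠ 0) (hnn : ∀ i, 0 ≤ v i)
    (htwo : ∃ i j : Fin 3, i ≠ j ∧ v i ≠ 0 ∧ v j ≠ 0) :
    ¬ (∀ p ∈ posOctant, ∀ q ∈ posOctant, ∃ d : Fin 3 → ℝ,
        (∀ i, 0 < d i) ∧ (∃ ρ : ℝ, ∀ i, d i * v i = ρ * v i) ∧ (∀ i, d i * p i = q i)) := by
  intro h
  obtain ⟨i, j, hij, hvi, hvj⟩ := htwo
  obtain ⟨d, hdpos, ⟨ρ, hρ⟩, hdp⟩ :=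
    h (fun _ => 1) (by norm_num [posOctant]) (fun k => (k : ℝ) + 1)
      (by norm_num [posOctant])
  have hdi : d i = ρ := by
    have := hρ i; field_simp at this; exact this
  have hdj : d j = ρ := by
    have := hρ j; field_simp at this; exact this
  have hi := hdp i
  have hj := hdp j
  simp only [mul_one] at hi hj
  have : ((i : ℕ) : ℝ) = ((j : ℕ) : ℝ) := by
    have : ((i : ℕ) : ℝ) + 1 = ((j : ℕ) : ℝ) + 1 := by rw [← hi, ← hj, hdi, hdj]
    linarith
  exact hij (Fin.ext (Nat.cast_injective this))
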